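/- Let Δ³ ⊂ ℂ³ be the open unit polydisc (the open unit ball for the sup norm on ℂ³) and let V = Δ³ ∩ {(x, y, z) ∈ ℂ³ : z = x + y}. Then V is not a holomorphic retract of Δ³: there is no holomorphic map ρ : Δ³ → Δ³ with ρ ∘ ρ = ρ on Δ³ and ρ(Δ³) = V. -/

import Mathlib

open Metric Set

theorem stmt4
    (D V : Set (Fin 3 → ℂ))
    (hD : D = Metric.ball 0 1)
    (hV : V = D ∩ {p : Fin 3 → ℂ | p 2 = p 0 + p 1}) :
    ¬ ∃ ρ : (Fin 3 → ℂ) → (Fin 3 → ℂ),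
        AnalyticOnNhd ℂ ρ D ∧ Set.MapsTo ρ D D ∧
        (∀ z ∈ D, ρ (ρ z) = ρ z) ∧ ρ '' D = V := by
  rintro ⟨ρ, hAn, hMaps, hIdem, hIm⟩
  have h0D : (0 : Fin 3 → ℂ) ∈ D := by rw [hD]; simp
  have hDopen : IsOpen D := by rw [hD]; exact isOpen_ball
  have hfix : ∀ v ∈ V, ρ v = v := by
    intro v hv
    rw [← hIm] at hv
    obtain ⟨w, hw, rfl⟩ := hv
    exact hIdem w hw
  have h0V : (0 : Fin 3 → ℂ) ∈ V := by
    rw [hV]; exact ⟨h0D, by simp⟩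
  have hρ0 : ρ 0 = 0 := hfix 0 h0V
  have hρV : ∀ p ∈ D, (ρ p) 2 = (ρ p) 0 + (ρ p) 1 := by
    intro p hp
    have : ρ p ∈ V := by rw [← hIm]; exact ⟨p, hp, rfl⟩
    rw [hV] at this; exact this.2
  have hdiff0 : DifferentiableAt ℂ ρ 0 := (hAn 0 h0D).differentiableAt
  set L := fderiv ℂ ρ 0 with hLdef
  have hFd : HasFDerivAt ρ L 0 := hdiff0.hasFDerivAt
  -- membership of line points
  have hmemline : ∀ v : Fin 3 → ℂ, ‖v‖ ≤ 1 → ∀ l : ℂ, l ∈ Metric.ball (0:ℂ) 1 →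
      l • v ∈ D := by
    intro v hv l hl
    rw [Metric.mem_ball, dist_zero_right] at hl
    rw [hD, Metric.mem_ball, dist_zero_right]
    calc ‖l • v‖ = ‖l‖ * ‖v‖ := norm_smul _ _
      _ ≤ ‖l‖ * 1 := by gcongr
      _ < 1 := by simpa using hl
  have hevline : ∀ v : Fin 3 → ℂ, ∀ᶠ l : ℂ in nhds 0, l • v ∈ D := by
    intro v
    have hc : ContinuousAt (fun l : ℂ => l • v) 0 := by fun_prop
    have : D ∈ nhds ((fun l : ℂ => l • v) 0) := by
      simpa using hDopen.mem_nhds h0D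
    exact hc.eventually_mem this
  -- derivative along lines
  have hline : ∀ (v : Fin 3 → ℂ), HasDerivAt (fun l : ℂ => ρ (l • v)) (L v) 0 := by
    intro v
    have hsm : HasDerivAt (fun l : ℂ => l • v) v 0 := by
      simpa using (hasDerivAt_id (0:ℂ)).smul_const v
    have h0 : HasFDerivAt ρ L ((fun l : ℂ => l • v) 0) := by simpa using hFd
    exact h0.comp_hasDerivAt 0 hsm
  -- L fixes the plane
  have hLv : ∀ v : Fin 3 → ℂ, v 2 = v 0 + v 1 → L v = v := by
    intro v hv
    have hev : (fun l : ℂ => ρ (l • v)) =ᶠ[nhds (0:ℂ)] fun l => l • v := by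
      filter_upwards [hevline v] with l hl
      refine hfix _ ?_
      rw [hV]
      refine ⟨hl, ?_⟩
      simp only [Set.mem_setOf_eq, Pi.smul_apply, smul_eq_mul, hv]
      ring
    have hsm : HasDerivAt (fun l : ℂ => l • v) v 0 := by
      simpa using (hasDerivAt_id (0:ℂ)).smul_const v
    have h2 : HasDerivAt (fun l : ℂ => ρ (l • v)) v 0 := hsm.congr_of_eventuallyEq hev
    exact (hline v).unique h2
  -- Schwarz bound on rows
  have hrow : ∀ (i : Fin 3) (u : Fin 3 → ℂ), ‖u‖ ≤ 1 → ‖(L u i)‖ ≤ 1 := by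
    intro i u hu
    set φ : ℂ → ℂ := fun l => ρ (l • u) i with hφ
    have hdφ : DifferentiableOn ℂ φ (Metric.ball 0 1) := by
      intro l hl
      have h1 : DifferentiableAt ℂ ρ (l • u) := (hAn _ (hmemline u hu l hl)).differentiableAt
      have h2 : DifferentiableAt ℂ (fun l : ℂ => l • u) l := by fun_prop
      have h3 : DifferentiableAt ℂ (fun l : ℂ => ρ (l • u)) l := h1.comp l h2
      exact (differentiableAt_pi.mp h3 i).differentiableWithinAt
    have hmaps : Set.MapsTo φ (Metric.ball 0 1) (Metric.ball (0:ℂ) 1) := by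
      intro l hl
      have := hMaps (hmemline u hu l hl)
      rw [hD, Metric.mem_ball, dist_zero_right] at this
      rw [Metric.mem_ball, dist_zero_right]
      exact lt_of_le_of_lt (norm_le_pi_norm (ρ (l • u)) i) this
    have hφ0 : φ 0 = 0 := by simp [hφ, hρ0]
    have hd0 : HasDerivAt φ (L u i) 0 := hasDerivAt_pi.mp (hline u) i
    have := Complex.norm_deriv_le_one_of_mapsTo_ball hdφ
      (by rw [hφ0]; exact hmaps.mono_right Metric.ball_subset_closedBall) one_pos
    rwa [hd0.deriv] at this
  classical
  set e : Fin 3 → (Fin 3 → ℂ) := fun j => Pi.single j 1 with he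
  have hene : ∀ j, ‖e j‖ ≤ 1 := by
    intro j
    rw [pi_norm_le_iff_of_nonneg zero_le_one]
    intro b
    by_cases h : b = j <;> simp [he, h, Pi.single_eq_of_ne]
  set a : Fin 3 → Fin 3 → ℂ := fun i j => L (e j) i with ha
  -- evaluation formula
  have hLapp : ∀ (w0 w1 w2 : ℂ) (i : Fin 3),
      L (w0 • e 0 + w1 • e 1 + w2 • e 2) i = w0 * a i 0 + w1 * a i 1 + w2 * a i 2 := by
    intro w0 w1 w2 i
    simp only [map_add, map_smul, ha, Pi.add_apply, Pi.smul_apply, smul_eq_mul]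
  -- row sums bounded by 1
  have hphase : ∀ z : ℂ, ∃ w : ℂ, ‖w‖ ≤ 1 ∧ w * z = (‖z‖ : ℂ) := by
    intro z
    by_cases hz : z = 0
    · exact ⟨0, by simp, by simp [hz]⟩
    · refine ⟨(starRingEnd ℂ) z / ‖z‖, ?_, ?_⟩
      · rw [norm_div]
        simp [div_self, norm_ne_zero_iff.mpr hz]
      · have hz' : (‖z‖ : ℂ) ≠ 0 := by
          simpa using norm_ne_zero_iff.mpr hz
        calc (starRingEnd ℂ) z / (‖z‖ : ℂ) * z
            = z * (starRingEnd ℂ) z / (‖z‖ : ℂ) := by ring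
          _ = (Complex.normSq z : ℂ) / (‖z‖ : ℂ) := by rw [Complex.mul_conj]
          _ = (‖z‖ : ℂ) := by
              rw [Complex.normSq_eq_norm_sq]
              push_cast
              rw [sq, mul_div_assoc, div_self hz', mul_one]
  have hrowsum : ∀ i : Fin 3,
      ‖(a i 0)‖ + ‖(a i 1)‖ + ‖(a i 2)‖ ≤ 1 := by
    intro i
    obtain ⟨w0, hw0, hz0⟩ := hphase (a i 0)
    obtain ⟨w1, hw1, hz1⟩ := hphase (a i 1)
    obtain ⟨w2, hw2, hz2⟩ := hphase (a i 2)
    set u : Fin 3 → ℂ := w0 • e 0 + w1 • e 1 + w2 • e 2 with hu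
    have hu0 : u 0 = w0 := by
      simp [hu, he, Pi.single_eq_same, Pi.single_eq_of_ne (show (0:Fin 3) ≠ 1 by decide),
        Pi.single_eq_of_ne (show (0:Fin 3) ≠ 2 by decide)]
    have hu1 : u 1 = w1 := by
      simp [hu, he, Pi.single_eq_same, Pi.single_eq_of_ne (show (1:Fin 3) ≠ 0 by decide),
        Pi.single_eq_of_ne (show (1:Fin 3) ≠ 2 by decide)]
    have hu2 : u 2 = w2 := by
      simp [hu, he, Pi.single_eq_same, Pi.single_eq_of_ne (show (2:Fin 3) ≠ 0 by decide),
        Pi.single_eq_of_ne (show (2:Fin 3) ≠ 1 by decide)]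
    have hun : ‖u‖ ≤ 1 := by
      rw [pi_norm_le_iff_of_nonneg zero_le_one]
      intro b
      fin_cases b
      · simpa [hu0] using hw0
      · simpa [hu1] using hw1
      · simpa [hu2] using hw2
    have hb := hrow i u hun
    rw [hu, hLapp, hz0, hz1, hz2, ← Complex.ofReal_add, ← Complex.ofReal_add,
      Complex.norm_real, Real.norm_eq_abs, abs_of_nonneg (by positivity)] at hb
    exact hb
  -- constraints from fixed plane
  have hv1 : ∀ i, a i 0 + a i 2 = (e 0 + e 2) i := by
    intro i
    have h1 : L (e 0 + e 2) = e 0 + e 2 := by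
      refine hLv _ ?_
      simp [he, Pi.single_eq_same, Pi.single_eq_of_ne (show (2:Fin 3) ≠ 0 by decide),
        Pi.single_eq_of_ne (show (0:Fin 3) ≠ 2 by decide),
        Pi.single_eq_of_ne (show (1:Fin 3) ≠ 0 by decide),
        Pi.single_eq_of_ne (show (1:Fin 3) ≠ 2 by decide)]
    have := congrFun h1 i
    rw [map_add] at this
    simpa [ha] using this
  have hv2 : ∀ i, a i 1 + a i 2 = (e 1 + e 2) i := by
    intro i
    have h1 : L (e 1 + e 2) = e 1 + e 2 := by
      refine hLv _ ?_
      simp [he, Pi.single_eq_same, Pi.single_eq_of_ne (show (2:Fin 3) ≠ 1 by decide),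
        Pi.single_eq_of_ne (show (0:Fin 3) ≠ 1 by decide),
        Pi.single_eq_of_ne (show (0:Fin 3) ≠ 2 by decide),
        Pi.single_eq_of_ne (show (1:Fin 3) ≠ 2 by decide)]
    have := congrFun h1 i
    rw [map_add] at this
    simpa [ha] using this
  -- plane identity for the derivative along e 2
  have hplane : a 2 2 = a 0 2 + a 1 2 := by
    have hd : ∀ i : Fin 3, HasDerivAt (fun l : ℂ => ρ (l • e 2) i) (a i 2) 0 :=
      fun i => hasDerivAt_pi.mp (hline (e 2)) i
    have hdψ : HasDerivAt (fun l : ℂ => ρ (l • e 2) 2 - ρ (l • e 2) 0 - ρ (l • e 2) 1)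
        (a 2 2 - a 0 2 - a 1 2) 0 := ((hd 2).sub (hd 0)).sub (hd 1)
    have hev : (fun l : ℂ => ρ (l • e 2) 2 - ρ (l • e 2) 0 - ρ (l • e 2) 1)
        =ᶠ[nhds (0:ℂ)] fun _ => (0:ℂ) := by
      filter_upwards [hevline (e 2)] with l hl
      have := hρV _ hl
      rw [this]; ring
    have hzero : HasDerivAt (fun l : ℂ => ρ (l • e 2) 2 - ρ (l • e 2) 0 - ρ (l • e 2) 1)
        0 0 := (hasDerivAt_const (0:ℂ) (0:ℂ)).congr_of_eventuallyEq hev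
    have := hdψ.unique hzero
    linear_combination this
  -- extract scalar constraints
  have he00 : a 0 0 + a 0 2 = 1 := by
    have := hv1 0
    simpa [he, Pi.single_eq_same, Pi.single_eq_of_ne (show (0:Fin 3) ≠ 2 by decide)] using this
  have he01 : a 0 1 + a 0 2 = 0 := by
    have := hv2 0
    simpa [he, Pi.single_eq_of_ne (show (0:Fin 3) ≠ 1 by decide),
      Pi.single_eq_of_ne (show (0:Fin 3) ≠ 2 by decide)] using this
  have he10 : a 1 0 + a 1 2 = 0 := by
    have := hv1 1
    simpa [he, Pi.single_eq_of_ne (show (1:Fin 3) ≠ 0 by decide),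
      Pi.single_eq_of_ne (show (1:Fin 3) ≠ 2 by decide)] using this
  have he11 : a 1 1 + a 1 2 = 1 := by
    have := hv2 1
    simpa [he, Pi.single_eq_same, Pi.single_eq_of_ne (show (1:Fin 3) ≠ 2 by decide)] using this
  have he20 : a 2 0 + a 2 2 = 1 := by
    have := hv1 2
    simpa [he, Pi.single_eq_same, Pi.single_eq_of_ne (show (2:Fin 3) ≠ 0 by decide)] using this
  have he21 : a 2 1 + a 2 2 = 1 := by
    have := hv2 2
    simpa [he, Pi.single_eq_same, Pi.single_eq_of_ne (show (2:Fin 3) ≠ 1 by decide)] using this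
  -- s := a 0 2 is zero
  have habs0 : ∀ i j, (0:ℝ) ≤ ‖(a i j)‖ := fun i j => norm_nonneg _
  have hkey : ∀ (s : ℂ), ‖(1 - s)‖ + ‖(-s)‖ + ‖s‖ ≤ 1 → s = 0 := by
    intro s hs
    have h1 : (1:ℝ) ≤ ‖(1 - s)‖ + ‖s‖ := by
      calc (1:ℝ) = ‖((1 - s) + s)‖ := by norm_num
        _ ≤ ‖(1 - s)‖ + ‖s‖ := norm_add_le _ _
    rw [norm_neg] at hs
    have : ‖s‖ ≤ 0 := by linarith
    exact norm_eq_zero.mp (le_antisymm this (norm_nonneg _))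
  have hs0 : a 0 2 = 0 := by
    refine hkey _ ?_
    have h := hrowsum 0
    have e1 : a 0 0 = 1 - a 0 2 := by linear_combination he00
    have e2 : a 0 1 = -a 0 2 := by linear_combination he01
    rwa [e1, e2] at h
  have ht0 : a 1 2 = 0 := by
    have h := hrowsum 1
    have e1 : a 1 0 = -a 1 2 := by linear_combination he10
    have e2 : a 1 1 = 1 - a 1 2 := by linear_combination he11
    rw [e1, e2] at h
    have h1 : (1:ℝ) ≤ ‖(1 - a 1 2)‖ + ‖(a 1 2)‖ := by
      calc (1:ℝ) = ‖((1 - a 1 2) + a 1 2)‖ := by norm_num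
        _ ≤ _ := norm_add_le _ _
    rw [norm_neg] at h
    have : ‖(a 1 2)‖ ≤ 0 := by linarith
    exact norm_eq_zero.mp (le_antisymm this (norm_nonneg _))
  have ha22 : a 2 2 = 0 := by rw [hplane, hs0, ht0, add_zero]
  have ha20 : a 2 0 = 1 := by linear_combination he20 - ha22
  have ha21 : a 2 1 = 1 := by linear_combination he21 - ha22
  have := hrowsum 2
  rw [ha20, ha21, ha22] at this
  simp at this
  linarith
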